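/- Let n and r be positive integers. For every natural number k, the coefficient of X^{rk} in the polynomial (X + X^2 + ... + X^{r-1})^n (an element of ℤ[X]; for r = 1 this polynomial is 0 when n ≥ 1) equals the number of words w ∈ S(n,r) with exactly k ascents. (Equivalently, applying the operator E_r, defined on polynomials by E_r(X^m) = X^{m/r} if r divides m and E_r(X^m) = 0 otherwise, one has E_r((X + X^2 + ... + X^{r-1})^n) = Σ_{w ∈ S(n,r)} X^{asc(w)}.) -/
import Mathlib


open scoped Classical

noncomputable section

/-- Value of a word `w : Fin (n+1) → ℕ` at a natural index (junk value `0` out of range). -/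
def wv {n : ℕ} (w : Fin (n + 1) → ℕ) (k : ℕ) : ℕ :=
  if h : k < n + 1 then w ⟨k, h⟩ else 0

/-- The number of ascents of a word `w = (w_0, w_1, …, w_n)`, i.e. the number of indices
`i ∈ {0,…,n-1}` with `w_i < w_{i+1}`. -/
def asc {n : ℕ} (w : Fin (n + 1) → ℕ) : ℕ :=
  ((Finset.range n).filter fun i => wv w i < wv w (i + 1)).card

/-- The set `S(n,r)` of Smirnov words `w = (w_0, …, w_n) ∈ {0,…,r-1}^{n+1}` with
`w_0 = w_n = 0` and no two consecutive entries equal. -/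
def smirnov (n r : ℕ) : Finset (Fin (n + 1) → ℕ) :=
  (Fintype.piFinset fun _ => Finset.range r).filter fun w =>
    wv w 0 = 0 ∧ wv w n = 0 ∧ ∀ i < n, wv w i ≠ wv w (i + 1)

/-- `k ∈ {1,…,n-1}` is a double ascent of `w` if `w_{k-1} < w_k < w_{k+1}`. -/
def doubleAscent {n : ℕ} (w : Fin (n + 1) → ℕ) (k : ℕ) : Prop :=
  1 ≤ k ∧ k < n ∧ wv w (k - 1) < wv w k ∧ wv w k < wv w (k + 1)

/-- `k ∈ {1,…,n-1}` is a double descent of `w` if `w_{k-1} > w_k > w_{k+1}`. -/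
def doubleDescent {n : ℕ} (w : Fin (n + 1) → ℕ) (k : ℕ) : Prop :=
  1 ≤ k ∧ k < n ∧ wv w k < wv w (k - 1) ∧ wv w (k + 1) < wv w k

/-- `w` has the matching property: for every double ascent `k` of `w` there is a double
descent `ℓ > k` with `w_k = w_ℓ` and `w_k ≤ w_j` for all `k < j < ℓ`. -/
def hasMatching {n : ℕ} (w : Fin (n + 1) → ℕ) : Prop :=
  ∀ k, doubleAscent w k →
    ∃ l, k < l ∧ doubleDescent w l ∧ wv w k = wv w l ∧
      ∀ j, k < j → j < l → wv w k ≤ wv w j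

namespace SmirnovProofAux

/-- Step values with junk `0` out of range. -/
def pv (n : ℕ) (p : Fin n → ℕ) (j : ℕ) : ℕ := if h : j < n then p ⟨j, h⟩ else 0

/-- Prefix sums of the step values. -/
def S (n : ℕ) (p : Fin n → ℕ) (i : ℕ) : ℕ := ∑ j ∈ Finset.range i, pv n p j

/-- The word associated to a step sequence. -/
def W (n r : ℕ) (p : Fin n → ℕ) : Fin (n + 1) → ℕ := fun i => (r * n - S n p i.val) % r

/-- The step sequence associated to a word. -/
def Pw (n r : ℕ) (w : Fin (n + 1) → ℕ) : Fin n → ℕ :=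
  fun i => (r + wv w i.val - wv w (i.val + 1)) % r

lemma arith (M a r : ℕ) (hr : 0 < r) (h1 : a ≤ M) (h3 : a < r) :
    (M - a) % r = if a ≤ M % r then M % r - a else M % r + r - a := by
  have hM : r * (M / r) + M % r = M := Nat.div_add_mod M r
  have hrem : M % r < r := Nat.mod_lt _ hr
  set q := M / r with hq
  set rem := M % r with hrem0
  split_ifs with h
  · have hMa : M - a = (rem - a) + r * q := by omega
    rw [hMa, Nat.add_mul_mod_self_left, Nat.mod_eq_of_lt (by omega)]
  · have hq1 : 1 ≤ q := by
      rcases Nat.eq_zero_or_pos q with h0 | h0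
      · exfalso; rw [h0, Nat.mul_zero] at hM; omega
      · exact h0
    have ht : r ≤ r * q := Nat.le_mul_of_pos_right r hq1
    have hmu : r * (q - 1) = r * q - r := by rw [Nat.mul_sub, Nat.mul_one]
    have hMa : M - a = (rem + r - a) + r * (q - 1) := by omega
    rw [hMa, Nat.add_mul_mod_self_left, Nat.mod_eq_of_lt (by omega)]

lemma S_le (n r : ℕ) (p : Fin n → ℕ)
    (hp : ∀ j < n, 1 ≤ pv n p j ∧ pv n p j < r) :
    ∀ i ≤ n, S n p i ≤ r * i := by
  intro i hi
  calc S n p i ≤ ∑ _j ∈ Finset.range i, r :=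
        Finset.sum_le_sum fun j hj =>
          le_of_lt (hp j (lt_of_lt_of_le (Finset.mem_range.mp hj) hi)).2
    _ = r * i := by simp [Finset.sum_const, Finset.card_range, Nat.mul_comm]

lemma wv_W (n r : ℕ) (p : Fin n → ℕ) (i : ℕ) (hi : i ≤ n) :
    wv (W n r p) i = (r * n - S n p i) % r := by
  unfold wv W
  rw [dif_pos (by omega : i < n + 1)]

lemma step (n r : ℕ) (hr : 0 < r) (p : Fin n → ℕ)
    (hp : ∀ j < n, 1 ≤ pv n p j ∧ pv n p j < r) (i : ℕ) (hi : i < n) :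
    wv (W n r p) (i + 1) =
      if pv n p i ≤ wv (W n r p) i then wv (W n r p) i - pv n p i
      else wv (W n r p) i + r - pv n p i := by
  have ha := hp i hi
  have hS1 : S n p (i + 1) = S n p i + pv n p i := Finset.sum_range_succ _ _
  have hle : S n p (i + 1) ≤ r * n :=
    le_trans (S_le n r p hp (i + 1) hi) (Nat.mul_le_mul_left r hi)
  rw [wv_W n r p (i + 1) hi, wv_W n r p i (le_of_lt hi)]
  have h1 : pv n p i ≤ r * n - S n p i := by omega
  have h2 : r * n - S n p (i + 1) = (r * n - S n p i) - pv n p i := by omega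
  rw [h2, arith _ _ _ hr h1 ha.2]

lemma stepFacts (n r : ℕ) (hr : 0 < r) (p : Fin n → ℕ)
    (hp : ∀ j < n, 1 ≤ pv n p j ∧ pv n p j < r) (i : ℕ) (hi : i < n) :
    (wv (W n r p) i < wv (W n r p) (i + 1) ↔ wv (W n r p) i < pv n p i) ∧
    wv (W n r p) i ≠ wv (W n r p) (i + 1) ∧
    pv n p i = (r + wv (W n r p) i - wv (W n r p) (i + 1)) % r ∧
    S n p (i + 1) + wv (W n r p) (i + 1) =
      S n p i + wv (W n r p) i +
        (if wv (W n r p) i < wv (W n r p) (i + 1) then r else 0) := by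
  have ha := hp i hi
  have hst := step n r hr p hp i hi
  have hwlt : wv (W n r p) i < r := by
    rw [wv_W n r p i (le_of_lt hi)]; exact Nat.mod_lt _ hr
  have hS1 : S n p (i + 1) = S n p i + pv n p i := Finset.sum_range_succ _ _
  set a := pv n p i
  set x := wv (W n r p) i
  set y := wv (W n r p) (i + 1)
  by_cases h : a ≤ x
  · rw [if_pos h] at hst
    refine ⟨by omega, by omega, ?_, ?_⟩
    · have hmod : r + x - y = r + a := by omega
      rw [hmod, Nat.add_mod_left, Nat.mod_eq_of_lt ha.2]
    · rw [if_neg (by omega : ¬ x < y)]; omega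
  · rw [if_neg h] at hst
    refine ⟨by omega, by omega, ?_, ?_⟩
    · have hmod : r + x - y = a := by omega
      rw [hmod, Nat.mod_eq_of_lt ha.2]
    · rw [if_pos (by omega : x < y)]; omega

lemma tele (n r : ℕ) (hr : 0 < r) (p : Fin n → ℕ)
    (hp : ∀ j < n, 1 ≤ pv n p j ∧ pv n p j < r) :
    ∀ i ≤ n, S n p i + wv (W n r p) i =
      r * ((Finset.range i).filter fun j => wv (W n r p) j < wv (W n r p) (j + 1)).card := by
  intro i
  induction i with
  | zero =>
      intro _
      rw [wv_W n r p 0 (Nat.zero_le n)]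
      simp [S]
  | succ i ih =>
      intro hi
      have ih' := ih (by omega)
      have hf := (stepFacts n r hr p hp i (by omega)).2.2.2
      rw [Finset.range_add_one, Finset.filter_insert]
      by_cases hxy : wv (W n r p) i < wv (W n r p) (i + 1)
      · rw [if_pos hxy] at hf ⊢
        rw [Finset.card_insert_of_notMem (by simp)]
        set c := ((Finset.range i).filter fun j => wv (W n r p) j < wv (W n r p) (j + 1)).card
        have : r * (c + 1) = r * c + r := by ring
        omega
      · rw [if_neg hxy] at hf ⊢
        omega

lemma Pw_facts (n r : ℕ) (w : Fin (n + 1) → ℕ)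
    (hwlt : ∀ i, wv w i < r) (hne : ∀ i < n, wv w i ≠ wv w (i + 1)) (i : ℕ) (hi : i < n) :
    1 ≤ pv n (Pw n r w) i ∧ pv n (Pw n r w) i < r ∧
    pv n (Pw n r w) i =
      if wv w i < wv w (i + 1) then wv w i + r - wv w (i + 1) else wv w i - wv w (i + 1) := by
  have hx := hwlt i
  have hy := hwlt (i + 1)
  have hne' := hne i hi
  have hpv : pv n (Pw n r w) i = (r + wv w i - wv w (i + 1)) % r := by
    unfold pv Pw
    rw [dif_pos hi]
  by_cases h : wv w i < wv w (i + 1)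
  · have he : r + wv w i - wv w (i + 1) = wv w i + r - wv w (i + 1) := by omega
    have hlt : wv w i + r - wv w (i + 1) < r := by omega
    rw [hpv, he, Nat.mod_eq_of_lt hlt, if_pos h]
    exact ⟨by omega, hlt, rfl⟩
  · have he : r + wv w i - wv w (i + 1) = r + (wv w i - wv w (i + 1)) := by omega
    rw [hpv, he, Nat.add_mod_left, Nat.mod_eq_of_lt (by omega), if_neg h]
    exact ⟨by omega, by omega, rfl⟩

lemma tele2 (n r : ℕ) (w : Fin (n + 1) → ℕ)
    (hwlt : ∀ i, wv w i < r) (hne : ∀ i < n, wv w i ≠ wv w (i + 1)) (hw0 : wv w 0 = 0) :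
    ∀ i ≤ n, S n (Pw n r w) i + wv w i =
      r * ((Finset.range i).filter fun j => wv w j < wv w (j + 1)).card := by
  intro i
  induction i with
  | zero => intro _; simp [S, hw0]
  | succ i ih =>
      intro hi
      have ih' := ih (by omega)
      have hf := (Pw_facts n r w hwlt hne i (by omega)).2.2
      have hS1 : S n (Pw n r w) (i + 1) = S n (Pw n r w) i + pv n (Pw n r w) i :=
        Finset.sum_range_succ _ _
      have hb1 := hwlt i
      have hb2 := hwlt (i + 1)
      rw [Finset.range_add_one, Finset.filter_insert]
      by_cases hxy : wv w i < wv w (i + 1)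
      · rw [if_pos hxy] at hf ⊢
        rw [Finset.card_insert_of_notMem (by simp)]
        set c := ((Finset.range i).filter fun j => wv w j < wv w (j + 1)).card
        have : r * (c + 1) = r * c + r := by ring
        omega
      · rw [if_neg hxy] at hf ⊢
        omega

lemma sum_eq (n : ℕ) (p : Fin n → ℕ) : S n p n = ∑ i : Fin n, p i := by
  unfold S
  rw [← Fin.sum_univ_eq_sum_range (fun j => pv n p j) n]
  refine Finset.sum_congr rfl fun i _ => ?_
  unfold pv
  rw [dif_pos i.isLt]

end SmirnovProofAux

open SmirnovProofAux in
/-- The coefficient of `X^{rk}` in `(X + X² + ⋯ + X^{r-1})^n ∈ ℤ[X]` equals the number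
of Smirnov words `w ∈ S(n,r)` with exactly `k` ascents. -/
theorem coeff_pow_eq_card_smirnov (n r : ℕ) (hn : 0 < n) (hr : 0 < r) (k : ℕ) :
    ((∑ j ∈ Finset.Ico 1 r, (Polynomial.X : Polynomial ℤ) ^ j) ^ n).coeff (r * k) =
      (((smirnov n r).filter fun w => asc w = k).card : ℤ) := by
  classical
  -- Expand the power as a sum over step sequences.
  have hpoly : ((∑ j ∈ Finset.Ico 1 r, (Polynomial.X : Polynomial ℤ) ^ j) ^ n) =
      ∑ p ∈ Fintype.piFinset (fun _ : Fin n => Finset.Ico 1 r),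
        (Polynomial.X : Polynomial ℤ) ^ (∑ i, p i) := by
    have h1 : ((∑ j ∈ Finset.Ico 1 r, (Polynomial.X : Polynomial ℤ) ^ j) ^ n) =
        ∏ _i : Fin n, (∑ j ∈ Finset.Ico 1 r, (Polynomial.X : Polynomial ℤ) ^ j) := by
      rw [Finset.prod_const, Finset.card_univ, Fintype.card_fin]
    rw [h1, Finset.prod_univ_sum]
    exact Finset.sum_congr rfl fun p _ => Finset.prod_pow_eq_pow_sum _ _ _
  rw [hpoly, Polynomial.finset_sum_coeff]
  have hcoeff : ∀ p ∈ Fintype.piFinset (fun _ : Fin n => Finset.Ico 1 r),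
      ((Polynomial.X : Polynomial ℤ) ^ (∑ i, p i)).coeff (r * k) =
        if r * k = ∑ i, p i then 1 else 0 := fun p _ => Polynomial.coeff_X_pow _ _
  rw [Finset.sum_congr rfl hcoeff, Finset.sum_boole]
  -- Now the bijection.
  have hcard :
      ((Fintype.piFinset (fun _ : Fin n => Finset.Ico 1 r)).filter
          fun p => r * k = ∑ i, p i).card =
        ((smirnov n r).filter fun w => asc w = k).card := by
    apply Finset.card_bij' (i := fun p _ => W n r p) (j := fun w _ => Pw n r w)
    · -- forward membership
      intro p hp
      rw [Finset.mem_filter] at hp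
      have hp' : ∀ j < n, 1 ≤ pv n p j ∧ pv n p j < r := by
        intro j hj
        unfold pv
        rw [dif_pos hj]
        have := Fintype.mem_piFinset.mp hp.1 ⟨j, hj⟩
        rw [Finset.mem_Ico] at this
        exact this
      have hsum : S n p n = r * k := by rw [sum_eq]; omega
      have htel := tele n r hr p hp' n le_rfl
      have hwn : wv (W n r p) n = 0 := by
        rw [wv_W n r p n le_rfl, hsum]
        have he : r * n - r * k = r * (n - k) := by rw [Nat.mul_sub]
        rw [he, Nat.mul_mod_right]
      have hw0 : wv (W n r p) 0 = 0 := by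
        rw [wv_W n r p 0 (Nat.zero_le n)]
        simp [S]
      have hasc : asc (W n r p) = k := by
        have h2 : r * k = r * asc (W n r p) := by
          unfold asc; omega
        exact (Nat.eq_of_mul_eq_mul_left hr h2).symm
      rw [Finset.mem_filter]
      refine ⟨Finset.mem_filter.mpr ⟨?_, hw0, hwn, ?_⟩, hasc⟩
      · rw [Fintype.mem_piFinset]
        intro i
        rw [Finset.mem_range]
        exact Nat.mod_lt _ hr
      · intro i hi
        exact (stepFacts n r hr p hp' i hi).2.1
    · -- backward membership
      intro w hw
      rw [Finset.mem_filter] at hw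
      obtain ⟨hws, hwk⟩ := hw
      rw [smirnov, Finset.mem_filter] at hws
      obtain ⟨hwpi, hw0, hwn, hne⟩ := hws
      have hwlt : ∀ i, wv w i < r := by
        intro i
        unfold wv
        split
        · next h =>
            have := Fintype.mem_piFinset.mp hwpi ⟨i, h⟩
            rwa [Finset.mem_range] at this
        · exact hr
      have htel := tele2 n r w hwlt hne hw0 n le_rfl
      rw [Finset.mem_filter]
      constructor
      · rw [Fintype.mem_piFinset]
        intro i
        have := Pw_facts n r w hwlt hne i.val i.isLt
        have hpe : pv n (Pw n r w) i.val = Pw n r w i := by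
          unfold pv
          rw [dif_pos i.isLt]
        rw [Finset.mem_Ico]
        rw [hpe] at this
        exact ⟨this.1, this.2.1⟩
      · have hsum : S n (Pw n r w) n = r * k := by
          rw [← hwk]
          unfold asc
          omega
        rw [← sum_eq]
        omega
    · -- left inverse
      intro p hp
      rw [Finset.mem_filter] at hp
      have hp' : ∀ j < n, 1 ≤ pv n p j ∧ pv n p j < r := by
        intro j hj
        unfold pv
        rw [dif_pos hj]
        have := Fintype.mem_piFinset.mp hp.1 ⟨j, hj⟩
        rw [Finset.mem_Ico] at this
        exact this
      funext i
      have hf := (stepFacts n r hr p hp' i.val i.isLt).2.2.1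
      have h1 : Pw n r (W n r p) i = pv n p i.val := by
        unfold Pw
        exact hf.symm
      rw [h1]
      unfold pv
      rw [dif_pos i.isLt]
    · -- right inverse
      intro w hw
      rw [Finset.mem_filter] at hw
      obtain ⟨hws, _⟩ := hw
      rw [smirnov, Finset.mem_filter] at hws
      obtain ⟨hwpi, hw0, hwn, hne⟩ := hws
      have hwlt : ∀ i, wv w i < r := by
        intro i
        unfold wv
        split
        · next h =>
            have := Fintype.mem_piFinset.mp hwpi ⟨i, h⟩
            rwa [Finset.mem_range] at this
        · exact hr
      funext i
      have hi' : i.val ≤ n := by omega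
      have htel := tele2 n r w hwlt hne hw0 i.val hi'
      set c := ((Finset.range i.val).filter fun j => wv w j < wv w (j + 1)).card with hc
      have hcle : c ≤ i.val := le_trans (Finset.card_filter_le _ _) (by rw [Finset.card_range])
      have hmul1 : r * c ≤ r * n := Nat.mul_le_mul_left r (le_trans hcle hi')
      have he1 : r * (n - c) = r * n - r * c := Nat.mul_sub r n c
      have he : r * n - S n (Pw n r w) i.val = r * (n - c) + wv w i.val := by omega
      have hwi : wv w i.val = w i := by
        unfold wv
        rw [dif_pos i.isLt]
      have : W n r (Pw n r w) i = (r * n - S n (Pw n r w) i.val) % r := rfl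
      rw [this, he, Nat.mul_add_mod, Nat.mod_eq_of_lt (hwlt i.val), hwi]
  rw [hcard]
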